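/- In a directed graph consisting of disjoint 'variable gadgets' joined only through 'clause nodes', any directed cycle of length at most 3 either lies entirely within a single variable gadget, or consists of exactly one β-node and one clause node (a 2-cycle), or consists of the special node d and one clause node (a 2-cycle). In particular, no 3-cycle packing contains a cycle meeting two distinct variable gadgets. -/

import Mathlib

variable {V : Type*} [DecidableEq V]

/-- A directed (simple) cycle given as a list of distinct vertices. -/
def IsDicycle (A : V → V → Prop) (c : List V) : Prop :=
  2 ≤ c.length ∧ c.Nodup ∧ c.Chain' A ∧
    ∀ h : c ≠ [], A (c.getLast h) (c.head h)

def cycVerts (c : List V) : Set V := {v | v ∈ c}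

/-- A `K`-cycle packing inside the vertex set `W`. -/
def IsCyclePackingOn (A : V → V → Prop) (K : ℕ) (W : Set V) (P : Finset (List V)) : Prop :=
  (∀ c ∈ P, IsDicycle A c ∧ c.length ≤ K ∧ ∀ v ∈ c, v ∈ W) ∧
  (P : Set (List V)).Pairwise fun c d => ∀ v, v ∈ c → v ∉ d

def packSize (P : Finset (List V)) : ℕ := ∑ c ∈ P, c.length

def pcovered (P : Finset (List V)) : Set V := {v | ∃ c ∈ P, v ∈ c}

/-- Maximum size of a `K`-cycle packing on `G[W]`. -/
noncomputable def wDir (A : V → V → Prop) (K : ℕ) (W : Set V) : ℕ :=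
  sSup {n | ∃ P, IsCyclePackingOn A K W P ∧ packSize P = n}

/-- Minimum number of `L`-nodes covered over all maximum `K`-cycle packings on `G[W]`. -/
noncomputable def wLDir (A : V → V → Prop) (K : ℕ) (L W : Set V) : ℕ :=
  sInf {k | ∃ P, IsCyclePackingOn A K W P ∧ packSize P = wDir A K W ∧
    (pcovered P ∩ L).ncard = k}

/-- The nodes of a variable gadget: `α_i`, `β_{pol,i}` and the leaf nodes
(`t/τ` for `pol = true`, `f/φ` for `pol = false`). -/
inductive GNode : Type
  | alpha (i : Fin 2)
  | beta (pol : Bool) (i : Fin 2)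
  | leaf (pol : Bool) (i : Fin 2)
deriving DecidableEq

/-- The internal arcs of a variable gadget. -/
def gadgetArc : GNode → GNode → Prop
  | .alpha i, .beta _ j => i = j
  | .beta pol i, .leaf pol' j => pol = pol' ∧ i = j
  | .leaf _ i, .alpha j => i = j
  | .leaf pol i, .leaf pol' j => pol = pol' ∧ i ≠ j
  | _, _ => False

/-- Vertices of the KEP construction: gadget nodes (one gadget per variable in `ι`),
clause nodes (`Fin m`), and the special node `d` (`Unit`). -/
abbrev KVert (ι : Type*) (m : ℕ) := (ι × GNode) ⊕ (Fin m) ⊕ Unit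

/-- The arcs of the KEP construction: gadget-internal arcs, 2-cycles between each clause
node `δ_c` and `d`, and 2-cycles between `δ_c` and `β_{v,pol,i}` exactly when `c` is the
`i`-th clause containing the literal `(v, pol)` (recorded by `occ`). -/
def kepArc {ι : Type*} {m : ℕ} (occ : ι → Bool → Fin 2 → Fin m) :
    KVert ι m → KVert ι m → Prop := fun a b =>
  match a, b with
  | .inl (v, x), .inl (w, y) => v = w ∧ gadgetArc x y
  | .inl (v, .beta pol i), .inr (.inl c) => occ v pol i = c
  | .inr (.inl c), .inl (v, .beta pol i) => occ v pol i = c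
  | .inr (.inl _), .inr (.inr _) => True
  | .inr (.inr _), .inr (.inl _) => True
  | _, _ => False


omit [DecidableEq V] in
lemma cv2 (x y : V) : cycVerts [x, y] = {x, y} := by
  ext z; simp [cycVerts]

omit [DecidableEq V] in
lemma cv2' (x y : V) : cycVerts [x, y] = {y, x} := by
  ext z; simp [cycVerts]; tauto

theorem stmt6_main {ι : Type*} [DecidableEq ι] {m : ℕ} (occ : ι → Bool → Fin 2 → Fin m) :
    ∀ c : List (KVert ι m), IsDicycle (kepArc occ) c → c.length ≤ 3 →
      (∃ v : ι, ∀ a ∈ c, ∃ g : GNode, a = Sum.inl (v, g)) ∨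
      (∃ (v : ι) (pol : Bool) (i : Fin 2) (cl : Fin m),
        cycVerts c = {Sum.inl (v, GNode.beta pol i), Sum.inr (Sum.inl cl)}) ∨
      (∃ cl : Fin m,
        cycVerts c = {Sum.inr (Sum.inr ()), Sum.inr (Sum.inl cl)}) := by
  intro c hc hlen
  obtain ⟨h2, hnd, hch, hlast⟩ := hc
  rcases c with _ | ⟨a, _ | ⟨b, _ | ⟨e, _ | ⟨f, t⟩⟩⟩⟩
  · simp at h2
  · simp at h2
  · -- [a, b]
    have hab : kepArc occ a b := (List.isChain_cons_cons.mp hch).1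
    have hba : kepArc occ b a := hlast (by simp)
    rcases a with ⟨v, (i | ⟨pol, i⟩ | ⟨pol, i⟩)⟩ | (cl | u) <;>
      rcases b with ⟨w, (j | ⟨pol', j⟩ | ⟨pol', j⟩)⟩ | (cl' | u') <;>
      simp only [kepArc, gadgetArc] at hab hba <;>
      first
        | exact hab.elim
        | exact hba.elim
        | exact hab.2.elim
        | exact hba.2.elim
        | (obtain ⟨rfl, -⟩ := hab; refine Or.inl ⟨v, fun x hx => ?_⟩;
           simp only [List.mem_cons, List.not_mem_nil, or_false] at hx;
           rcases hx with rfl | rfl <;> exact ⟨_, rfl⟩)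
        | exact Or.inr (Or.inl ⟨_, _, _, _, cv2 _ _⟩)
        | exact Or.inr (Or.inl ⟨_, _, _, _, cv2' _ _⟩)
        | exact Or.inr (Or.inr ⟨_, cv2 _ _⟩)
        | exact Or.inr (Or.inr ⟨_, cv2' _ _⟩)
  · -- [a, b, e]
    have hab : kepArc occ a b := (List.isChain_cons_cons.mp hch).1
    have hbe : kepArc occ b e := (List.isChain_cons_cons.mp (List.isChain_cons_cons.mp hch).2).1
    have hea : kepArc occ e a := hlast (by simp)
    rcases a with ⟨v, (i | ⟨pol, i⟩ | ⟨pol, i⟩)⟩ | (cl | u) <;>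
      rcases b with ⟨w, (j | ⟨pol', j⟩ | ⟨pol', j⟩)⟩ | (cl' | u') <;>
      rcases e with ⟨z, (k | ⟨pol'', k⟩ | ⟨pol'', k⟩)⟩ | (cl'' | u'') <;>
      simp only [kepArc, gadgetArc] at hab hbe hea <;>
      first
        | exact hab.elim
        | exact hbe.elim
        | exact hea.elim
        | exact hab.2.elim
        | exact hbe.2.elim
        | exact hea.2.elim
        | (obtain ⟨rfl, -⟩ := hab; obtain ⟨rfl, -⟩ := hbe;
           refine Or.inl ⟨v, fun x hx => ?_⟩;
           simp only [List.mem_cons, List.not_mem_nil, or_false] at hx;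
           rcases hx with rfl | rfl | rfl <;> exact ⟨_, rfl⟩)
  · simp at hlen; omega

/-- in the KEP construction, every directed cycle of length at most 3 lies
inside a single variable gadget, or is a 2-cycle on one `β`-node and one clause node, or
is a 2-cycle on `d` and one clause node; in particular no cycle of a 3-cycle packing
meets two distinct variable gadgets. -/
theorem stmt6 {ι : Type*} [DecidableEq ι] {m : ℕ} (occ : ι → Bool → Fin 2 → Fin m) :
    (∀ c : List (KVert ι m), IsDicycle (kepArc occ) c → c.length ≤ 3 →
      (∃ v : ι, ∀ a ∈ c, ∃ g : GNode, a = Sum.inl (v, g)) ∨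
      (∃ (v : ι) (pol : Bool) (i : Fin 2) (cl : Fin m),
        cycVerts c = {Sum.inl (v, GNode.beta pol i), Sum.inr (Sum.inl cl)}) ∨
      (∃ cl : Fin m,
        cycVerts c = {Sum.inr (Sum.inr ()), Sum.inr (Sum.inl cl)})) ∧
    (∀ P, IsCyclePackingOn (kepArc occ) 3 Set.univ P → ∀ c ∈ P,
      ¬ ∃ v w : ι, v ≠ w ∧ (∃ g : GNode, Sum.inl (v, g) ∈ c) ∧
        (∃ g : GNode, Sum.inl (w, g) ∈ c)) := by
  refine ⟨stmt6_main occ, ?_⟩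
  rintro P hP c hcP ⟨v, w, hvw, ⟨g, hg⟩, ⟨g', hg'⟩⟩
  obtain ⟨hdc, hlen, -⟩ := hP.1 c hcP
  rcases stmt6_main occ c hdc hlen with ⟨v0, h⟩ | ⟨v0, pol, i, cl, hset⟩ | ⟨cl, hset⟩
  · obtain ⟨g1, e1⟩ := h _ hg
    obtain ⟨g2, e2⟩ := h _ hg'
    simp only [Sum.inl.injEq, Prod.mk.injEq] at e1 e2
    exact hvw (e1.1.trans e2.1.symm)
  · have h1 : (Sum.inl (v, g) : KVert ι m) ∈ cycVerts c := hg
    have h2 : (Sum.inl (w, g') : KVert ι m) ∈ cycVerts c := hg'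
    rw [hset] at h1 h2
    simp only [Set.mem_insert_iff, Set.mem_singleton_iff, Sum.inl.injEq,
      Prod.mk.injEq, reduceCtorEq, or_false] at h1 h2
    exact hvw (h1.1.trans h2.1.symm)
  · have h1 : (Sum.inl (v, g) : KVert ι m) ∈ cycVerts c := hg
    rw [hset] at h1
    simp at h1
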